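/- arXiv:2602.15266 — 2 statements merged into one kernel-verified Lean document; each statement's English description precedes it below -/
import Mathlib

section
/- The unique critical point p* of f(p) = -(1-p)·ln(1-p) + ln(p) in (0,1) satisfies 0.88 < p* < 0.89. -/
lemma exp2_gt : (7.389056 : ℝ) < Real.exp 2 := by
  have h := Real.exp_one_gt_d9
  have : Real.exp 2 = Real.exp 1 * Real.exp 1 := by
    rw [← Real.exp_add]; norm_num
  nlinarith [Real.exp_pos 1]

lemma exp2_lt : Real.exp 2 < (7.3890561 : ℝ) := by
  have h := Real.exp_one_lt_d9
  have : Real.exp 2 = Real.exp 1 * Real.exp 1 := by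
    rw [← Real.exp_add]; norm_num
  nlinarith [Real.exp_pos 1]

lemma log_bound_low : (-47/22 : ℝ) < Real.log 0.12 := by
  rw [Real.lt_log_iff_exp_lt (by norm_num)]
  have h1 : Real.exp (-47/22 : ℝ) * Real.exp (47/22 : ℝ) = 1 := by
    rw [← Real.exp_add]; norm_num
  have h2 : Real.exp (47/22 : ℝ) = Real.exp 2 * Real.exp (3/22) := by
    rw [← Real.exp_add]; norm_num
  have h3 : (1 + 3/22 : ℝ) ≤ Real.exp (3/22) := by
    have := Real.add_one_le_exp (3/22 : ℝ); linarith
  have h4 : (25/3 : ℝ) < Real.exp (47/22 : ℝ) := by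
    rw [h2]; nlinarith [exp2_gt, Real.exp_pos (3/22 : ℝ)]
  nlinarith [Real.exp_pos (-47/22 : ℝ), Real.exp_pos (47/22 : ℝ)]

lemma log_bound_high : Real.log 0.11 < (-189/89 : ℝ) := by
  rw [Real.log_lt_iff_lt_exp (by norm_num)]
  have h2 : Real.exp (-189/89 : ℝ) = Real.exp (-2) * Real.exp (-(11/89)) := by
    rw [← Real.exp_add]; norm_num
  have h3 : (1 - 11/89 : ℝ) ≤ Real.exp (-(11/89)) := by
    have := Real.add_one_le_exp (-(11/89) : ℝ); linarith
  have h5 : Real.exp (-2 : ℝ) * Real.exp (2 : ℝ) = 1 := by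
    rw [← Real.exp_add]; norm_num
  have h6 : (1/7.3890561 : ℝ) < Real.exp (-2) := by
    nlinarith [exp2_lt, exp2_gt, Real.exp_pos (-2 : ℝ)]
  rw [h2]
  nlinarith [Real.exp_pos (-2 : ℝ), Real.exp_pos (-(11/89) : ℝ)]

theorem stmt_8 (pstar : ℝ) (hps : pstar ∈ Set.Ioo (0:ℝ) 1)
    (hcrit : 1 + Real.log (1 - pstar) + 1 / pstar = 0) :
    0.88 < pstar ∧ pstar < 0.89 := by
  obtain ⟨h0, h1⟩ := hps
  constructor
  · by_contra h
    push_neg at h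
    have hle : (0.12 : ℝ) ≤ 1 - pstar := by linarith
    have hlog : Real.log 0.12 ≤ Real.log (1 - pstar) :=
      Real.log_le_log (by norm_num) hle
    have hinv : (25/22 : ℝ) ≤ 1 / pstar := by
      rw [le_div_iff₀ h0]; nlinarith
    nlinarith [log_bound_low]
  · by_contra h
    push_neg at h
    have hle : 1 - pstar ≤ (0.11 : ℝ) := by linarith
    have hpos : (0 : ℝ) < 1 - pstar := by linarith
    have hlog : Real.log (1 - pstar) ≤ Real.log 0.11 :=
      Real.log_le_log hpos hle
    have hinv : 1 / pstar ≤ (100/89 : ℝ) := by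
      rw [div_le_iff₀ h0]; nlinarith
    nlinarith [log_bound_high]
end

section
/- The golden-ratio partition point lies strictly below the maximizer of the balance function: if p* ∈ (0,1) satisfies 1 + ln(1-p*) + 1/p* = 0, then (√5 - 1)/2 < p*. -/
theorem stmt_19 (pstar : ℝ) (hps : pstar ∈ Set.Ioo (0:ℝ) 1)
    (hcrit : 1 + Real.log (1 - pstar) + 1 / pstar = 0) :
    (Real.sqrt 5 - 1) / 2 < pstar := by
  obtain ⟨hp0, hp1⟩ := hps
  set q : ℝ := (Real.sqrt 5 - 1) / 2 with hq
  have hs5 : Real.sqrt 5 ^ 2 = 5 := Real.sq_sqrt (by norm_num)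
  have hs5lo : (2.2:ℝ) < Real.sqrt 5 := by
    nlinarith [Real.sqrt_nonneg 5]
  have hs5hi : Real.sqrt 5 < 2.24 := by
    nlinarith [Real.sqrt_nonneg 5]
  have hq0 : 0 < q := by rw [hq]; linarith
  have hq1 : q < 1 := by rw [hq]; linarith
  by_contra hcon
  push_neg at hcon
  -- monotonicity: g(q) ≤ g(pstar) = 0
  have h1 : Real.log (1 - q) ≤ Real.log (1 - pstar) :=
    Real.log_le_log (by linarith) (by linarith)
  have h2 : 1 / q ≤ 1 / pstar := one_div_le_one_div_of_le hp0 hcon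
  have hgq : 1 + Real.log (1 - q) + 1 / q ≤ 0 := by linarith
  -- but g(q) > 0
  have hlog : (-2.6 : ℝ) < Real.log (1 - q) := by
    rw [Real.lt_log_iff_exp_lt (by linarith)]
    have hexp : (3.6:ℝ) ≤ Real.exp 2.6 := by
      have := Real.add_one_le_exp (2.6:ℝ); linarith
    have : Real.exp (-2.6) = 1 / Real.exp 2.6 := by
      rw [Real.exp_neg]; ring
    rw [this]
    have h36 : (1:ℝ) / Real.exp 2.6 ≤ 1 / 3.6 :=
      one_div_le_one_div_of_le (by norm_num) hexp
    have : (1:ℝ) - q > 0.38 := by rw [hq]; linarith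
    linarith
  have hinv : (1.6:ℝ) < 1 / q := by
    rw [lt_div_iff₀ hq0, hq]; nlinarith
  linarith
end
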